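/- If all agent capacities are equal, then the VCG mechanism with Clarke-pivot payments is envy-free: in the capacitated b-matching setting with c i = c k for all agents i, k, for any welfare-maximizing allocation M, welfare-maximizing allocations M^{-k} excluding each agent k, and Clarke-pivot payments p_k = v(M^{-k}) − v(M) + Σ_j M k j · w k j, it holds for all agents i and k that Σ_j M i j · w i j − p_i ≥ Σ_j M k j · w i j − p_k. -/

import Mathlib

/-- An allocation in the capacitated `b`-matching setting: agent `i` gets at
most `c i` units in total and at most `q j` units of good `j` are allocated. -/
def IsAlloc {n m : ℕ} (c : Fin n → ℕ) (q : Fin m → ℕ)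
    (a : Fin n → Fin m → ℕ) : Prop :=
  (∀ i, ∑ j, a i j ≤ c i) ∧ (∀ j, ∑ i, a i j ≤ q j)

/-- The value of an allocation: `∑_{i,j} a i j · w i j`. -/
def allocVal {n m : ℕ} (w : Fin n → Fin m → ℝ) (a : Fin n → Fin m → ℕ) : ℝ :=
  ∑ i, ∑ j, (a i j : ℝ) * w i j

open Finset

section
variable {n m : ℕ}

def Emat (l : Fin n) (j : Fin m) : Fin n → Fin m → ℤ :=
  fun l' j' => if l' = l ∧ j' = j then 1 else 0

lemma Emat_nonneg (l : Fin n) (j : Fin m) (l' : Fin n) (j' : Fin m) :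
    (0:ℤ) ≤ Emat l j l' j' := by
  unfold Emat; split <;> norm_num

lemma Emat_row (l : Fin n) (j : Fin m) (l' : Fin n) :
    ∑ j', Emat l j l' j' = if l' = l then 1 else 0 := by
  by_cases h : l' = l <;> simp [Emat, h]

lemma Emat_col (l : Fin n) (j : Fin m) (j' : Fin m) :
    ∑ l', Emat l j l' j' = if j' = j then 1 else 0 := by
  by_cases h : j' = j <;> simp [Emat, h]

lemma Emat_ne_row (l : Fin n) (j : Fin m) (l' : Fin n) (j' : Fin m) (h : l' ≠ l) :
    Emat l j l' j' = 0 := by simp [Emat, h]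

lemma Emat_self (l : Fin n) (j : Fin m) : Emat l j l j = 1 := by simp [Emat]

lemma sum_row_subE (f : Fin n → Fin m → ℤ) (l : Fin n) (jA : Fin m) (l' : Fin n) :
    ∑ j, (f l' j - Emat l jA l' j) = (∑ j, f l' j) - (if l' = l then 1 else 0) := by
  rw [Finset.sum_sub_distrib, Emat_row]

lemma sum_row_addE (f : Fin n → Fin m → ℤ) (l : Fin n) (jA : Fin m) (l' : Fin n) :
    ∑ j, (f l' j + Emat l jA l' j) = (∑ j, f l' j) + (if l' = l then 1 else 0) := by
  rw [Finset.sum_add_distrib, Emat_row]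

lemma sum_col_subE (f : Fin n → Fin m → ℤ) (l : Fin n) (jA : Fin m) (j : Fin m) :
    ∑ l', (f l' j - Emat l jA l' j) = (∑ l', f l' j) - (if j = jA then 1 else 0) := by
  rw [Finset.sum_sub_distrib, Emat_col]

lemma sum_col_addE (f : Fin n → Fin m → ℤ) (l : Fin n) (jA : Fin m) (j : Fin m) :
    ∑ l', (f l' j + Emat l jA l' j) = (∑ l', f l' j) + (if j = jA then 1 else 0) := by
  rw [Finset.sum_add_distrib, Emat_col]

lemma nonneg_subE (f : Fin n → Fin m → ℤ) (l : Fin n) (jA : Fin m)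
    (hf : ∀ l' j, 0 ≤ f l' j) (hA : 0 < f l jA) (l' : Fin n) (j : Fin m) :
    0 ≤ f l' j - Emat l jA l' j := by
  by_cases h : l' = l ∧ j = jA
  · obtain ⟨rfl, rfl⟩ := h; rw [Emat_self]; omega
  · have : Emat l jA l' j = 0 := by simp [Emat]; tauto
    rw [this]; simpa using hf l' j

def RD (i k : Fin n) (y z : Fin n → Fin m → ℤ) : ℕ → Fin n ⊕ Fin m → Prop
  | 0, v => v = Sum.inl i
  | (d+1), v =>
      RD i k y z d v ∨
        match v with
        | Sum.inl l => l ≠ k ∧ ∃ j, RD i k y z d (Sum.inr j) ∧ 0 < z l j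
        | Sum.inr j => ∃ l, RD i k y z d (Sum.inl l) ∧ 0 < y l j

lemma RD_succ_of (i k : Fin n) (y z : Fin n → Fin m → ℤ) (d : ℕ) (v : Fin n ⊕ Fin m)
    (h : RD i k y z d v) : RD i k y z (d+1) v := by
  cases v <;> exact Or.inl h

lemma RD_mono (i k : Fin n) (y z : Fin n → Fin m → ℤ) {d d' : ℕ} (h : d ≤ d')
    {v : Fin n ⊕ Fin m} (hv : RD i k y z d v) : RD i k y z d' v := by
  induction d' with
  | zero => exact (Nat.le_zero.mp h) ▸ hv
  | succ d' ih =>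
    rcases Nat.lt_or_ge d (d'+1) with h' | h'
    · exact RD_succ_of _ _ _ _ _ _ (ih (Nat.lt_succ_iff.mp h'))
    · exact (Nat.le_antisymm h h') ▸ hv

lemma RD_pres (i k : Fin n) (y z y' z' : Fin n → Fin m → ℤ) (l₀ : Fin n)
    (hy : ∀ l j, l ≠ l₀ → y' l j = y l j) (hz : ∀ l j, l ≠ l₀ → z' l j = z l j) :
    ∀ d (v : Fin n ⊕ Fin m), RD i k y z d v → ¬ RD i k y z d (Sum.inl l₀) →
      RD i k y' z' d v := by
  intro d
  induction d with
  | zero => intro v hv _; exact hv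
  | succ d ih =>
    intro v hv hneg
    have hnegd : ¬ RD i k y z d (Sum.inl l₀) :=
      fun h => hneg (RD_succ_of _ _ _ _ _ _ h)
    cases v with
    | inl l =>
      rcases hv with hv | ⟨hlk, j, hj, hzpos⟩
      · exact RD_succ_of _ _ _ _ _ _ (ih _ hv hnegd)
      · have hll : l ≠ l₀ := by
          rintro rfl; exact hneg (Or.inr ⟨hlk, j, hj, hzpos⟩)
        exact Or.inr ⟨hlk, j, ih _ hj hnegd, by rw [hz _ _ hll]; exact hzpos⟩
    | inr j =>
      rcases hv with hv | ⟨l, hl, hypos⟩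
      · exact RD_succ_of _ _ _ _ _ _ (ih _ hv hnegd)
      · have hll : l ≠ l₀ := by
          rintro rfl; exact hneg (RD_succ_of _ _ _ _ _ _ hl)
        exact Or.inr ⟨l, ih _ hl hnegd, by rw [hy _ _ hll]; exact hypos⟩

/-- Augment along a reachable column: one unit of agent `i`'s `y`-mass can be
pushed into column `j₀` of `z`. -/
lemma augC (i k : Fin n) :
    ∀ d (y z : Fin n → Fin m → ℤ),
      (∀ l j, 0 ≤ y l j) → (∀ l j, 0 ≤ z l j) → (∀ j, y k j = 0) →
      ∀ j₀, RD i k y z d (Sum.inr j₀) →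
      ∃ y' z' : Fin n → Fin m → ℤ,
        (∀ l j, 0 ≤ y' l j) ∧ (∀ l j, 0 ≤ z' l j) ∧
        (∀ l j, y' l j + z' l j = y l j + z l j) ∧
        (∀ j, y' k j = 0) ∧
        (∀ l, ∑ j, y' l j = (∑ j, y l j) - (if l = i then 1 else 0)) ∧
        (∀ l, ∑ j, z' l j = (∑ j, z l j) + (if l = i then 1 else 0)) ∧
        (∀ j, ∑ l, y' l j = (∑ l, y l j) - (if j = j₀ then 1 else 0)) ∧
        (∀ j, ∑ l, z' l j = (∑ l, z l j) + (if j = j₀ then 1 else 0)) := by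
  intro d
  induction d using Nat.strong_induction_on with
  | _ d IH =>
  intro y z hy hz hyk j₀ hreach
  classical
  have hex : ∃ t, RD i k y z t (Sum.inr j₀) := ⟨d, hreach⟩
  have hd₀ : RD i k y z (Nat.find hex) (Sum.inr j₀) := Nat.find_spec hex
  have hmin : ∀ t, t < Nat.find hex → ¬ RD i k y z t (Sum.inr j₀) :=
    fun t ht => Nat.find_min hex ht
  have hd₀le : Nat.find hex ≤ d := Nat.find_le hreach
  obtain ⟨d₁, hd₁⟩ : ∃ d₁, Nat.find hex = d₁ + 1 := by
    have hne : Nat.find hex ≠ 0 := by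
      intro h0; rw [h0] at hd₀; cases (show (Sum.inr j₀ : Fin n ⊕ Fin m) = Sum.inl i from hd₀)
    exact Nat.exists_eq_succ_of_ne_zero hne
  rw [hd₁] at hd₀ hmin hd₀le
  rcases hd₀ with hcontra | ⟨l, hl, hylpos⟩
  · exact absurd hcontra (hmin d₁ (by omega))
  by_cases hli : l = i
  · -- base: direct move y i j₀ → z i j₀
    obtain rfl : l = i := hli
    have hik : l ≠ k := by
      rintro rfl; rw [hyk j₀] at hylpos; exact lt_irrefl 0 hylpos
    set y' : Fin n → Fin m → ℤ := fun l' j' => y l' j' - Emat l j₀ l' j' with hy'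
    set z' : Fin n → Fin m → ℤ := fun l' j' => z l' j' + Emat l j₀ l' j' with hz'
    refine ⟨y', z', ?_, ?_, ?_, ?_, ?_, ?_, ?_, ?_⟩
    · intro l' j'; simp only [hy']; exact nonneg_subE y l j₀ hy hylpos l' j'
    · intro l' j'; simp only [hz']
      have h1 := Emat_nonneg l j₀ l' j'; have h2 := hz l' j'; omega
    · intro l' j'; simp only [hy', hz']; ring
    · intro j'; simp only [hy']
      rw [hyk j', Emat_ne_row l j₀ k j' (Ne.symm hik)]; ring
    · intro l'; simp only [hy']; rw [sum_row_subE]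
    · intro l'; simp only [hz']; rw [sum_row_addE]
    · intro j'; simp only [hy']; rw [sum_col_subE]
    · intro j'; simp only [hz']; rw [sum_col_addE]
  · -- recursive: swap at row l, then recurse at column j'
    have hlk : l ≠ k := by
      rintro rfl; rw [hyk j₀] at hylpos; exact lt_irrefl 0 hylpos
    obtain ⟨d₂, hd₂⟩ : ∃ d₂, d₁ = d₂ + 1 := by
      have hne : d₁ ≠ 0 := by
        rintro rfl
        have hl0 : (Sum.inl l : Fin n ⊕ Fin m) = Sum.inl i := hl
        exact hli (Sum.inl.inj hl0)
      exact Nat.exists_eq_succ_of_ne_zero hne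
    subst hd₂
    rcases hl with hl' | ⟨_, j', hj', hzpos⟩
    · exact absurd (Or.inr ⟨l, hl', hylpos⟩ : RD i k y z (d₂+1) (Sum.inr j₀))
        (hmin (d₂+1) (by omega))
    have hnotl : ¬ RD i k y z d₂ (Sum.inl l) := by
      intro h
      exact hmin (d₂+1) (by omega) (Or.inr ⟨l, h, hylpos⟩)
    have hjj : j' ≠ j₀ := by
      rintro rfl
      exact hmin d₂ (by omega) hj'
    -- the swapped state
    set y₁ : Fin n → Fin m → ℤ :=
      fun l' j'' => y l' j'' - Emat l j₀ l' j'' + Emat l j' l' j'' with hy₁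
    set z₁ : Fin n → Fin m → ℤ :=
      fun l' j'' => z l' j'' + Emat l j₀ l' j'' - Emat l j' l' j'' with hz₁
    have hy₁n : ∀ l' j, 0 ≤ y₁ l' j := by
      intro l' j
      have h1 := nonneg_subE y l j₀ hy hylpos l' j
      have h2 := Emat_nonneg l j' l' j
      simp only [hy₁]; omega
    have hz₁n : ∀ l' j, 0 ≤ z₁ l' j := by
      intro l' j
      have h1 := nonneg_subE z l j' hz hzpos l' j
      have h2 := Emat_nonneg l j₀ l' j
      simp only [hz₁]; omega
    have hy₁k : ∀ j, y₁ k j = 0 := by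
      intro j
      simp only [hy₁]
      rw [hyk j, Emat_ne_row l j₀ k j (Ne.symm hlk), Emat_ne_row l j' k j (Ne.symm hlk)]
      ring
    have hpres : RD i k y₁ z₁ d₂ (Sum.inr j') := by
      refine RD_pres i k y z y₁ z₁ l ?_ ?_ d₂ _ hj' hnotl
      · intro l'' j'' h
        simp only [hy₁, Emat_ne_row l j₀ l'' j'' h, Emat_ne_row l j' l'' j'' h]; ring
      · intro l'' j'' h
        simp only [hz₁, Emat_ne_row l j₀ l'' j'' h, Emat_ne_row l j' l'' j'' h]; ring
    obtain ⟨y', z', h1, h2, h3, h4, h5, h6, h7, h8⟩ :=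
      IH d₂ (by omega) y₁ z₁ hy₁n hz₁n hy₁k j' hpres
    refine ⟨y', z', h1, h2, ?_, h4, ?_, ?_, ?_, ?_⟩
    · intro l'' j''; rw [h3 l'' j'']; simp only [hy₁, hz₁]; ring
    · intro l'
      rw [h5 l']
      simp only [hy₁]
      have : ∑ j'', (y l' j'' - Emat l j₀ l' j'' + Emat l j' l' j'') = ∑ j'', y l' j'' := by
        rw [Finset.sum_add_distrib, Finset.sum_sub_distrib, Emat_row, Emat_row]; ring
      rw [this]
    · intro l'
      rw [h6 l']
      simp only [hz₁]
      have : ∑ j'', (z l' j'' + Emat l j₀ l' j'' - Emat l j' l' j'') = ∑ j'', z l' j'' := by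
        rw [Finset.sum_sub_distrib, Finset.sum_add_distrib, Emat_row, Emat_row]; ring
      rw [this]
    · intro j''
      rw [h7 j'']
      simp only [hy₁]
      rw [Finset.sum_add_distrib, Finset.sum_sub_distrib, Emat_col, Emat_col]
      rcases eq_or_ne j'' j₀ with rfl | hne
      · simp [hjj, Ne.symm hjj]
      · rcases eq_or_ne j'' j' with rfl | hne'
        · simp [hne]
        · simp [hne, hne']
    · intro j''
      rw [h8 j'']
      simp only [hz₁]
      rw [Finset.sum_sub_distrib, Finset.sum_add_distrib, Emat_col, Emat_col]
      rcases eq_or_ne j'' j₀ with rfl | hne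
      · simp [hjj, Ne.symm hjj]
      · rcases eq_or_ne j'' j' with rfl | hne'
        · simp [hne]
        · simp [hne, hne']

end

/-- Augment to a reachable row `l₀ ≠ i`: one unit of row `i`'s `y`-mass moves to
row `l₀`'s `y`-mass, column sums unchanged. -/
lemma augR (i k : Fin n) (d : ℕ) (y z : Fin n → Fin m → ℤ)
    (hy : ∀ l j, 0 ≤ y l j) (hz : ∀ l j, 0 ≤ z l j) (hyk : ∀ j, y k j = 0)
    (l₀ : Fin n) (hl₀i : l₀ ≠ i) (hreach : RD i k y z d (Sum.inl l₀)) :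
    ∃ y' z' : Fin n → Fin m → ℤ,
      (∀ l j, 0 ≤ y' l j) ∧ (∀ l j, 0 ≤ z' l j) ∧
      (∀ l j, y' l j + z' l j = y l j + z l j) ∧
      (∀ j, y' k j = 0) ∧
      (∀ l, ∑ j, y' l j =
        (∑ j, y l j) - (if l = i then 1 else 0) + (if l = l₀ then 1 else 0)) ∧
      (∀ l, ∑ j, z' l j =
        (∑ j, z l j) + (if l = i then 1 else 0) - (if l = l₀ then 1 else 0)) ∧
      (∀ j, ∑ l, y' l j = ∑ l, y l j) ∧
      (∀ j, ∑ l, z' l j = ∑ l, z l j) := by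
  classical
  have hex : ∃ t, RD i k y z t (Sum.inl l₀) := ⟨d, hreach⟩
  have hd₀ : RD i k y z (Nat.find hex) (Sum.inl l₀) := Nat.find_spec hex
  have hmin : ∀ t, t < Nat.find hex → ¬ RD i k y z t (Sum.inl l₀) :=
    fun t ht => Nat.find_min hex ht
  obtain ⟨d₁, hd₁⟩ : ∃ d₁, Nat.find hex = d₁ + 1 := by
    have hne : Nat.find hex ≠ 0 := by
      intro h0; rw [h0] at hd₀
      have : (Sum.inl l₀ : Fin n ⊕ Fin m) = Sum.inl i := hd₀
      exact hl₀i (Sum.inl.inj this)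
    exact Nat.exists_eq_succ_of_ne_zero hne
  rw [hd₁] at hd₀ hmin
  rcases hd₀ with hcontra | ⟨hl₀k, j', hj', hzpos⟩
  · exact absurd hcontra (hmin d₁ (by omega))
  have hnot : ¬ RD i k y z d₁ (Sum.inl l₀) := hmin d₁ (by omega)
  set y₁ : Fin n → Fin m → ℤ := fun l' j'' => y l' j'' + Emat l₀ j' l' j'' with hy₁
  set z₁ : Fin n → Fin m → ℤ := fun l' j'' => z l' j'' - Emat l₀ j' l' j'' with hz₁
  have hy₁n : ∀ l' j, 0 ≤ y₁ l' j := by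
    intro l' j; simp only [hy₁]
    have h1 := Emat_nonneg l₀ j' l' j; have h2 := hy l' j; omega
  have hz₁n : ∀ l' j, 0 ≤ z₁ l' j := by
    intro l' j; simp only [hz₁]; exact nonneg_subE z l₀ j' hz hzpos l' j
  have hy₁k : ∀ j, y₁ k j = 0 := by
    intro j; simp only [hy₁]
    rw [hyk j, Emat_ne_row l₀ j' k j (Ne.symm hl₀k)]; ring
  have hpres : RD i k y₁ z₁ d₁ (Sum.inr j') := by
    refine RD_pres i k y z y₁ z₁ l₀ ?_ ?_ d₁ _ hj' hnot
    · intro l'' j'' h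
      simp only [hy₁, Emat_ne_row l₀ j' l'' j'' h]; ring
    · intro l'' j'' h
      simp only [hz₁, Emat_ne_row l₀ j' l'' j'' h]; ring
  obtain ⟨y', z', h1, h2, h3, h4, h5, h6, h7, h8⟩ :=
    augC i k d₁ y₁ z₁ hy₁n hz₁n hy₁k j' hpres
  refine ⟨y', z', h1, h2, ?_, h4, ?_, ?_, ?_, ?_⟩
  · intro l'' j''; rw [h3 l'' j'']; simp only [hy₁, hz₁]; ring
  · intro l'
    rw [h5 l']; simp only [hy₁]
    rw [Finset.sum_add_distrib, Emat_row]; ring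
  · intro l'
    rw [h6 l']; simp only [hz₁]
    rw [Finset.sum_sub_distrib, Emat_row]; ring
  · intro j''
    rw [h7 j'']; simp only [hy₁]
    rw [Finset.sum_add_distrib, Emat_col]
    rcases eq_or_ne j'' j' with rfl | hne
    · simp
    · simp [hne]
  · intro j''
    rw [h8 j'']; simp only [hz₁]
    rw [Finset.sum_sub_distrib, Emat_col]
    rcases eq_or_ne j'' j' with rfl | hne
    · simp
    · simp [hne]

/-- Key decomposition: if `u` is an allocation that avoids row `k` but may use
up to `2c` units in row `i`, and `a` is an allocation avoiding row `i`, then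
`u + a` splits into two genuine allocations, one of which avoids row `k`. -/
lemma decomp_int (i k : Fin n) (hik : i ≠ k) (cz : ℤ) (q : Fin m → ℤ)
    (u a : Fin n → Fin m → ℤ)
    (hu0 : ∀ l j, 0 ≤ u l j) (ha0 : ∀ l j, 0 ≤ a l j)
    (huk : ∀ j, u k j = 0) (hai : ∀ j, a i j = 0)
    (hur : ∀ l, l ≠ i → ∑ j, u l j ≤ cz) (hui : ∑ j, u i j ≤ 2 * cz)
    (har : ∀ l, ∑ j, a l j ≤ cz)
    (huc : ∀ j, ∑ l, u l j ≤ q j) (hac : ∀ j, ∑ l, a l j ≤ q j) :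
    ∃ y z : Fin n → Fin m → ℤ,
      (∀ l j, 0 ≤ y l j) ∧ (∀ l j, 0 ≤ z l j) ∧
      (∀ l j, y l j + z l j = u l j + a l j) ∧
      (∀ j, y k j = 0) ∧
      (∀ l, ∑ j, y l j ≤ cz) ∧ (∀ l, ∑ j, z l j ≤ cz) ∧
      (∀ j, ∑ l, y l j ≤ q j) ∧ (∀ j, ∑ l, z l j ≤ q j) := by
  classical
  -- invariant (no bound on row i of y)
  have key : ∀ t : ℕ, ∀ y z : Fin n → Fin m → ℤ,
      (∀ l j, 0 ≤ y l j) → (∀ l j, 0 ≤ z l j) →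
      (∀ l j, y l j + z l j = u l j + a l j) →
      (∀ j, y k j = 0) →
      (∀ l, l ≠ i → ∑ j, y l j ≤ cz) → (∀ l, ∑ j, z l j ≤ cz) →
      (∀ j, ∑ l, y l j ≤ q j) → (∀ j, ∑ l, z l j ≤ q j) →
      (∑ j, y i j).toNat ≤ t →
      ∃ y' z' : Fin n → Fin m → ℤ,
        (∀ l j, 0 ≤ y' l j) ∧ (∀ l j, 0 ≤ z' l j) ∧
        (∀ l j, y' l j + z' l j = u l j + a l j) ∧
        (∀ j, y' k j = 0) ∧
        (∀ l, ∑ j, y' l j ≤ cz) ∧ (∀ l, ∑ j, z' l j ≤ cz) ∧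
        (∀ j, ∑ l, y' l j ≤ q j) ∧ (∀ j, ∑ l, z' l j ≤ q j) := by
    intro t
    induction t using Nat.strong_induction_on with
    | _ t IH =>
    intro y z hy0 hz0 hsum hyk hyr hzr hyc hzc ht
    by_cases hdone : ∑ j, y i j ≤ cz
    · refine ⟨y, z, hy0, hz0, hsum, hyk, ?_, hzr, hyc, hzc⟩
      intro l
      rcases eq_or_ne l i with rfl | hne
      · exact hdone
      · exact hyr l hne
    push_neg at hdone
    -- row i of y exceeds cz
    have hrowsum : ∀ l, ∑ j, y l j + ∑ j, z l j = ∑ j, u l j + ∑ j, a l j := by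
      intro l
      rw [← Finset.sum_add_distrib, ← Finset.sum_add_distrib]
      exact Finset.sum_congr rfl fun j _ => hsum l j
    have hcolsum : ∀ j, ∑ l, y l j + ∑ l, z l j = ∑ l, u l j + ∑ l, a l j := by
      intro j
      rw [← Finset.sum_add_distrib, ← Finset.sum_add_distrib]
      exact Finset.sum_congr rfl fun l _ => hsum l j
    have hai' : ∑ j, a i j = 0 := by
      apply Finset.sum_eq_zero; intro j _; exact hai j
    have hzi : ∑ j, z i j < cz := by
      have h := hrowsum i
      have := hui
      omega
    have ht1 : 1 ≤ (∑ j, y i j).toNat := by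
      have hcz0 : (0:ℤ) ≤ cz := le_trans (Finset.sum_nonneg fun j _ => hz0 i j) (hzr i)
      omega
    by_cases hc1 : ∃ dd jj, RD i k y z dd (Sum.inr jj) ∧ ∑ l, z l jj < q jj
    · obtain ⟨dd, jj, hrch, hslack⟩ := hc1
      obtain ⟨y', z', h1, h2, h3, h4, h5, h6, h7, h8⟩ :=
        augC i k dd y z hy0 hz0 hyk jj hrch
      have hsum' : ∀ l j, y' l j + z' l j = u l j + a l j := by
        intro l j; rw [h3 l j]; exact hsum l j
      refine IH (t-1) (by omega) y' z' h1 h2 hsum' h4 ?_ ?_ ?_ ?_ ?_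
      · intro l hne; rw [h5 l, if_neg hne]
        have := hyr l hne
        omega
      · intro l; rw [h6 l]
        have := hzr l
        rcases eq_or_ne l i with rfl | hne
        · simp only [if_pos rfl]; omega
        · rw [if_neg hne]; omega
      · intro j; rw [h7 j]
        have := hyc j
        split <;> omega
      · intro j; rw [h8 j]
        rcases eq_or_ne j jj with rfl | hne
        · rw [if_pos rfl]; omega
        · rw [if_neg hne]
          have := hzc j; omega
      · rw [h5 i, if_pos rfl]
        omega
    by_cases hc2 : ∃ dd ll, RD i k y z dd (Sum.inl ll) ∧ ll ≠ i ∧ ∑ j, y ll j < cz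
    · obtain ⟨dd, ll, hrch, hlli, hslack⟩ := hc2
      obtain ⟨y', z', h1, h2, h3, h4, h5, h6, h7, h8⟩ :=
        augR i k dd y z hy0 hz0 hyk ll hlli hrch
      have hsum' : ∀ l j, y' l j + z' l j = u l j + a l j := by
        intro l j; rw [h3 l j]; exact hsum l j
      refine IH (t-1) (by omega) y' z' h1 h2 hsum' h4 ?_ ?_ ?_ ?_ ?_
      · intro l hne; rw [h5 l, if_neg hne]
        rcases eq_or_ne l ll with rfl | hne'
        · rw [if_pos rfl]; omega
        · rw [if_neg hne']
          have := hyr l hne; omega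
      · intro l; rw [h6 l]
        rcases eq_or_ne l i with rfl | hne
        · rw [if_pos rfl, if_neg (Ne.symm hlli)]; omega
        · rw [if_neg hne]
          have := hzr l
          split <;> omega
      · intro j; rw [h7 j]; exact hyc j
      · intro j; rw [h8 j]; exact hzc j
      · rw [h5 i, if_pos rfl, if_neg (Ne.symm hlli)]
        omega
    -- blocked: counting contradiction
    exfalso
    push_neg at hc1 hc2
    set R : Finset (Fin n) :=
      Finset.univ.filter (fun l => ∃ dd, RD i k y z dd (Sum.inl l)) with hR
    set C : Finset (Fin m) :=
      Finset.univ.filter (fun j => ∃ dd, RD i k y z dd (Sum.inr j)) with hC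
    have hiR : i ∈ R := by
      rw [hR]; simp only [Finset.mem_filter, Finset.mem_univ, true_and]
      exact ⟨0, rfl⟩
    have hkR : k ∉ R := by
      rw [hR]; simp only [Finset.mem_filter, Finset.mem_univ, true_and]
      rintro ⟨dd, hdd⟩
      induction dd with
      | zero =>
        have : (Sum.inl k : Fin n ⊕ Fin m) = Sum.inl i := hdd
        exact hik (Sum.inl.inj this).symm
      | succ dd ih =>
        rcases hdd with hdd | ⟨hkk, _⟩
        · exact ih hdd
        · exact hkk rfl
    have fact_i : ∀ l ∈ R, ∀ j, j ∉ C → y l j = 0 := by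
      intro l hl j hj
      rw [hR] at hl; simp only [Finset.mem_filter, Finset.mem_univ, true_and] at hl
      obtain ⟨dd, hdd⟩ := hl
      by_contra hne
      have hpos : 0 < y l j := lt_of_le_of_ne (hy0 l j) (Ne.symm hne)
      exact hj (by
        rw [hC]; simp only [Finset.mem_filter, Finset.mem_univ, true_and]
        exact ⟨dd + 1, Or.inr ⟨l, hdd, hpos⟩⟩)
    have fact_iii : ∀ j ∈ C, ∀ l, l ∉ R → l ≠ k → z l j = 0 := by
      intro j hj l hl hlk
      rw [hC] at hj; simp only [Finset.mem_filter, Finset.mem_univ, true_and] at hj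
      obtain ⟨dd, hdd⟩ := hj
      by_contra hne
      have hpos : 0 < z l j := lt_of_le_of_ne (hz0 l j) (Ne.symm hne)
      exact hl (by
        rw [hR]; simp only [Finset.mem_filter, Finset.mem_univ, true_and]
        exact ⟨dd + 1, Or.inr ⟨hlk, j, hdd, hpos⟩⟩)
    have fact_ii : ∀ j ∈ C, ∑ l, z l j = q j := by
      intro j hj
      rw [hC] at hj; simp only [Finset.mem_filter, Finset.mem_univ, true_and] at hj
      obtain ⟨dd, hdd⟩ := hj
      have := hc1 dd j hdd
      have := hzc j
      omega
    have fact_iv : ∀ l ∈ R, l ≠ i → cz ≤ ∑ j, y l j := by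
      intro l hl hli
      rw [hR] at hl; simp only [Finset.mem_filter, Finset.mem_univ, true_and] at hl
      obtain ⟨dd, hdd⟩ := hl
      have := hc2 dd l hdd hli
      omega
    -- counting
    have S1 : ∀ l ∈ R, (∑ j, u l j) ≤ (∑ j ∈ C, u l j) + ∑ j ∈ Cᶜ, z l j := by
      intro l hl
      rw [← Finset.sum_add_sum_compl C (fun j => u l j)]
      have : ∑ j ∈ Cᶜ, u l j ≤ ∑ j ∈ Cᶜ, z l j := by
        apply Finset.sum_le_sum
        intro j hj
        have hyz := hsum l j
        have hy00 : y l j = 0 := fact_i l hl j (Finset.mem_compl.mp hj)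
        have := ha0 l j
        omega
      omega
    have S2 : ∀ j ∈ C, (∑ l ∈ R, u l j) ≤ (∑ l ∈ R, z l j) + z k j := by
      intro j hj
      have h1 : ∑ l ∈ R, u l j ≤ ∑ l, u l j :=
        Finset.sum_le_sum_of_subset_of_nonneg (Finset.subset_univ R)
          (fun l _ _ => hu0 l j)
      have h2 : ∑ l, z l j = ∑ l ∈ R, z l j + ∑ l ∈ Rᶜ, z l j :=
        (Finset.sum_add_sum_compl R (fun l => z l j)).symm
      have h3 : ∑ l ∈ Rᶜ, z l j = z k j := by
        apply Finset.sum_eq_single_of_mem k (Finset.mem_compl.mpr hkR)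
        intro l hl hlk
        exact fact_iii j hj l (Finset.mem_compl.mp hl) hlk
      have h4 := fact_ii j hj
      have h5 := huc j
      omega
    have S3 : ∑ l ∈ R, (∑ j, u l j) ≤ (∑ j ∈ C, z k j) + ∑ l ∈ R, (∑ j, z l j) := by
      calc ∑ l ∈ R, (∑ j, u l j)
          ≤ ∑ l ∈ R, ((∑ j ∈ C, u l j) + ∑ j ∈ Cᶜ, z l j) :=
            Finset.sum_le_sum S1
        _ = (∑ j ∈ C, ∑ l ∈ R, u l j) + ∑ l ∈ R, ∑ j ∈ Cᶜ, z l j := by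
            rw [Finset.sum_add_distrib, Finset.sum_comm]
        _ ≤ ((∑ j ∈ C, ∑ l ∈ R, z l j) + ∑ j ∈ C, z k j) + ∑ l ∈ R, ∑ j ∈ Cᶜ, z l j := by
            have := Finset.sum_le_sum S2
            rw [Finset.sum_add_distrib] at this
            omega
        _ = (∑ j ∈ C, z k j) + ((∑ l ∈ R, ∑ j ∈ C, z l j) + ∑ l ∈ R, ∑ j ∈ Cᶜ, z l j) := by
            rw [Finset.sum_comm (s := C) (t := R)]
            ring
        _ = (∑ j ∈ C, z k j) + ∑ l ∈ R, (∑ j, z l j) := by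
            rw [← Finset.sum_add_distrib]
            congr 1
            exact Finset.sum_congr rfl fun l _ =>
              Finset.sum_add_sum_compl C (fun j => z l j)
    have S4 : ∑ j ∈ C, z k j ≤ cz := by
      have h1 : ∑ j ∈ C, z k j ≤ ∑ j, z k j :=
        Finset.sum_le_sum_of_subset_of_nonneg (Finset.subset_univ C)
          (fun j _ _ => hz0 k j)
      have h2 : ∑ j, z k j = ∑ j, a k j := by
        apply Finset.sum_congr rfl
        intro j _
        have := hsum k j
        have := hyk j
        have := huk j
        omega
      have := har k
      omega
    -- combine
    have S5 : ∑ l ∈ R, ((∑ j, y l j) - ∑ j, a l j) ≤ cz := by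
      have : ∀ l ∈ R, (∑ j, y l j) - (∑ j, a l j) = (∑ j, u l j) - ∑ j, z l j := by
        intro l _
        have := hrowsum l
        omega
      rw [Finset.sum_congr rfl this, Finset.sum_sub_distrib]
      omega
    have S6 : (∑ j, y i j) ≤ ∑ l ∈ R, ((∑ j, y l j) - ∑ j, a l j) := by
      have hterm : (∑ j, y i j) - (∑ j, a i j) = ∑ j, y i j := by
        rw [hai']; ring
      rw [← hterm]
      apply Finset.single_le_sum (f := fun l => (∑ j, y l j) - ∑ j, a l j) _ hiR
      intro l hl
      by_cases hli : l = i
      · rw [hli, hai']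
        have := Finset.sum_nonneg (fun j (_ : j ∈ Finset.univ) => hy0 i j)
        omega
      · have h1 := fact_iv l hl hli
        have h2 := har l
        omega
    omega
  obtain ⟨y, z, h⟩ := key (∑ j, u i j).toNat u a hu0 ha0 (fun l j => rfl) huk
    (fun l hne => hur l hne) har huc hac (le_refl _)
  exact ⟨y, z, h⟩

lemma sum_split_two {α : Type*} [AddCommMonoid α] (i k : Fin n) (hik : i ≠ k)
    (f : Fin n → α) :
    ∑ l, f l = f i + (f k + ∑ l ∈ (Finset.univ.erase i).erase k, f l) := by
  rw [← Finset.add_sum_erase _ f (Finset.mem_univ i)]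
  congr 1
  rw [← Finset.add_sum_erase _ f (Finset.mem_erase.mpr ⟨Ne.symm hik, Finset.mem_univ k⟩)]

/-- ℕ-version of the decomposition. -/
lemma decomp_nat (i k : Fin n) (hik : i ≠ k) (c₀ : ℕ) (q : Fin m → ℕ)
    (u a : Fin n → Fin m → ℕ)
    (huk : ∀ j, u k j = 0) (hai : ∀ j, a i j = 0)
    (hur : ∀ l, l ≠ i → ∑ j, u l j ≤ c₀) (hui : ∑ j, u i j ≤ 2 * c₀)
    (har : ∀ l, ∑ j, a l j ≤ c₀)
    (huc : ∀ j, ∑ l, u l j ≤ q j) (hac : ∀ j, ∑ l, a l j ≤ q j) :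
    ∃ Y Z : Fin n → Fin m → ℕ,
      (∀ l j, Y l j + Z l j = u l j + a l j) ∧
      (∀ j, Y k j = 0) ∧
      (∀ l, ∑ j, Y l j ≤ c₀) ∧ (∀ l, ∑ j, Z l j ≤ c₀) ∧
      (∀ j, ∑ l, Y l j ≤ q j) ∧ (∀ j, ∑ l, Z l j ≤ q j) := by
  obtain ⟨y, z, hy0, hz0, hsum, hyk, hyr, hzr, hyc, hzc⟩ :=
    decomp_int i k hik (c₀ : ℤ) (fun j => (q j : ℤ))
      (fun l j => (u l j : ℤ)) (fun l j => (a l j : ℤ))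
      (fun l j => by positivity) (fun l j => by positivity)
      (fun j => by simp [huk j])
      (fun j => by simp [hai j])
      (fun l hne => by
        show ((∑ j, (u l j : ℤ))) ≤ (c₀ : ℤ)
        push_cast
        exact_mod_cast hur l hne)
      (by
        show ((∑ j, (u i j : ℤ))) ≤ 2 * (c₀ : ℤ)
        push_cast
        exact_mod_cast hui)
      (fun l => by
        show ((∑ j, (a l j : ℤ))) ≤ (c₀ : ℤ)
        push_cast
        exact_mod_cast har l)
      (fun j => by
        show ((∑ l, (u l j : ℤ))) ≤ ((q j : ℕ) : ℤ)
        push_cast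
        exact_mod_cast huc j)
      (fun j => by
        show ((∑ l, (a l j : ℤ))) ≤ ((q j : ℕ) : ℤ)
        push_cast
        exact_mod_cast hac j)
  refine ⟨fun l j => (y l j).toNat, fun l j => (z l j).toNat, ?_, ?_, ?_, ?_, ?_, ?_⟩
  · intro l j
    have h1 := hy0 l j; have h2 := hz0 l j; have h3 := hsum l j
    show (y l j).toNat + (z l j).toNat = u l j + a l j
    omega
  · intro j
    have := hyk j
    show (y k j).toNat = 0
    omega
  · intro l
    have h := hyr l
    have : ((∑ j, (y l j).toNat : ℕ) : ℤ) ≤ (c₀ : ℤ) := by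
      push_cast
      calc ∑ j, ((y l j).toNat : ℤ) = ∑ j, y l j :=
            Finset.sum_congr rfl fun j _ => Int.toNat_of_nonneg (hy0 l j)
        _ ≤ c₀ := hyr l
    exact_mod_cast this
  · intro l
    have : ((∑ j, (z l j).toNat : ℕ) : ℤ) ≤ (c₀ : ℤ) := by
      push_cast
      calc ∑ j, ((z l j).toNat : ℤ) = ∑ j, z l j :=
            Finset.sum_congr rfl fun j _ => Int.toNat_of_nonneg (hz0 l j)
        _ ≤ c₀ := hzr l
    exact_mod_cast this
  · intro j
    have : ((∑ l, (y l j).toNat : ℕ) : ℤ) ≤ ((q j : ℕ) : ℤ) := by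
      push_cast
      calc ∑ l, ((y l j).toNat : ℤ) = ∑ l, y l j :=
            Finset.sum_congr rfl fun l _ => Int.toNat_of_nonneg (hy0 l j)
        _ ≤ (q j : ℤ) := hyc j
    exact_mod_cast this
  · intro j
    have : ((∑ l, (z l j).toNat : ℕ) : ℤ) ≤ ((q j : ℕ) : ℤ) := by
      push_cast
      calc ∑ l, ((z l j).toNat : ℤ) = ∑ l, z l j :=
            Finset.sum_congr rfl fun l _ => Int.toNat_of_nonneg (hz0 l j)
        _ ≤ (q j : ℤ) := hzc j
    exact_mod_cast this


/-- If all agent capacities are equal, then the VCG mechanism with Clarke-pivot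
payments is envy-free in the capacitated `b`-matching setting. -/
theorem clarke_pivot_envy_free_homogeneous {n m : ℕ}
    (c : Fin n → ℕ) (q : Fin m → ℕ) (w : Fin n → Fin m → ℝ)
    (hw : ∀ i j, 0 ≤ w i j)
    (hc : ∀ i k, c i = c k)
    (M : Fin n → Fin m → ℕ) (hM : IsAlloc c q M)
    (hMmax : ∀ a, IsAlloc c q a → allocVal w a ≤ allocVal w M)
    (Mex : Fin n → Fin n → Fin m → ℕ)
    (hMex : ∀ k, IsAlloc c q (Mex k) ∧ (∀ j, Mex k k j = 0) ∧
      (∀ a, IsAlloc c q a → (∀ j, a k j = 0) → allocVal w a ≤ allocVal w (Mex k)))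
    (p : Fin n → ℝ)
    (hp : ∀ k, p k = allocVal w (Mex k) - allocVal w M + ∑ j, (M k j : ℝ) * w k j)
    (i k : Fin n) :
    (∑ j, (M k j : ℝ) * w i j) - p k ≤ (∑ j, (M i j : ℝ) * w i j) - p i := by
  rcases eq_or_ne i k with rfl | hik
  · exact le_refl _
  obtain ⟨hAk, hK0, hOptk⟩ := hMex k
  obtain ⟨hAi, hI0, hOpti⟩ := hMex i
  set c₀ := c i with hc₀
  set u : Fin n → Fin m → ℕ :=
    fun l j => if l = i then M i j + M k j else if l = k then 0 else M l j with hu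
  have hukj : ∀ j, u k j = 0 := by
    intro j; simp [hu, Ne.symm hik]
  have huij : ∀ j, u i j = M i j + M k j := by
    intro j; simp [hu]
  have hulj : ∀ l, l ≠ i → l ≠ k → ∀ j, u l j = M l j := by
    intro l h1 h2 j; simp [hu, h1, h2]
  have hcolu : ∀ j, ∑ l, u l j = ∑ l, M l j := by
    intro j
    rw [sum_split_two i k hik (fun l => u l j),
        sum_split_two i k hik (fun l => M l j)]
    have h3 : ∑ l ∈ (Finset.univ.erase i).erase k, u l j
        = ∑ l ∈ (Finset.univ.erase i).erase k, M l j := by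
      apply Finset.sum_congr rfl
      intro l hl
      have h := Finset.mem_erase.mp hl
      have h' := Finset.mem_erase.mp h.2
      exact hulj l h'.1 h.1 j
    rw [huij j, hukj j, h3]
    ring
  have hur : ∀ l, l ≠ i → ∑ j, u l j ≤ c₀ := by
    intro l hli
    rcases eq_or_ne l k with rfl | hlk
    · have : ∀ j, u l j = 0 := hukj
      rw [Finset.sum_congr rfl fun j _ => this j]
      simp
    · rw [Finset.sum_congr rfl fun j _ => hulj l hli hlk j]
      calc ∑ j, M l j ≤ c l := hM.1 l
        _ = c₀ := hc l i
  have hui : ∑ j, u i j ≤ 2 * c₀ := by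
    rw [Finset.sum_congr rfl fun j _ => huij j, Finset.sum_add_distrib]
    have h1 : ∑ j, M i j ≤ c₀ := hM.1 i
    have h2 : ∑ j, M k j ≤ c₀ := le_of_le_of_eq (hM.1 k) (hc k i)
    omega
  obtain ⟨Y, Z, hYZ, hYk0, hYr, hZr, hYc, hZc⟩ :=
    decomp_nat i k hik c₀ q u (Mex i) hukj hI0 hur hui
      (fun l => le_of_le_of_eq (hAi.1 l) (hc l i))
      (fun j => le_of_le_of_eq (le_of_eq (hcolu j)) rfl |>.trans (hM.2 j))
      (fun j => hAi.2 j)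
  have hallocY : IsAlloc c q Y :=
    ⟨fun l => by rw [hc l i]; exact hYr l, hYc⟩
  have hallocZ : IsAlloc c q Z :=
    ⟨fun l => by rw [hc l i]; exact hZr l, hZc⟩
  have hvY : allocVal w Y ≤ allocVal w (Mex k) := hOptk Y hallocY hYk0
  have hvZ : allocVal w Z ≤ allocVal w M := hMmax Z hallocZ
  have hsplit : allocVal w Y + allocVal w Z
      = (∑ l, ∑ j, (u l j : ℝ) * w l j) + allocVal w (Mex i) := by
    unfold allocVal
    rw [← Finset.sum_add_distrib, ← Finset.sum_add_distrib]
    apply Finset.sum_congr rfl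
    intro l _
    rw [← Finset.sum_add_distrib, ← Finset.sum_add_distrib]
    apply Finset.sum_congr rfl
    intro j _
    have h := hYZ l j
    have h' : (Y l j : ℝ) + (Z l j : ℝ) = (u l j : ℝ) + (Mex i l j : ℝ) := by
      exact_mod_cast congrArg (Nat.cast : ℕ → ℝ) h
    calc (Y l j : ℝ) * w l j + (Z l j : ℝ) * w l j
        = ((Y l j : ℝ) + (Z l j : ℝ)) * w l j := by ring
      _ = ((u l j : ℝ) + (Mex i l j : ℝ)) * w l j := by rw [h']
      _ = (u l j : ℝ) * w l j + (Mex i l j : ℝ) * w l j := by ring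
  have hvalu : (∑ l, ∑ j, (u l j : ℝ) * w l j)
      = allocVal w M - (∑ j, (M k j : ℝ) * w k j) + ∑ j, (M k j : ℝ) * w i j := by
    unfold allocVal
    rw [sum_split_two i k hik (fun l => ∑ j, (u l j : ℝ) * w l j),
        sum_split_two i k hik (fun l => ∑ j, (M l j : ℝ) * w l j)]
    have h1 : ∑ j, (u i j : ℝ) * w i j
        = (∑ j, (M i j : ℝ) * w i j) + ∑ j, (M k j : ℝ) * w i j := by
      rw [← Finset.sum_add_distrib]
      apply Finset.sum_congr rfl
      intro j _
      rw [huij j]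
      push_cast
      ring
    have h2 : ∑ j, (u k j : ℝ) * w k j = 0 := by
      apply Finset.sum_eq_zero
      intro j _
      rw [hukj j]
      simp
    have h3 : ∑ l ∈ (Finset.univ.erase i).erase k, ∑ j, (u l j : ℝ) * w l j
        = ∑ l ∈ (Finset.univ.erase i).erase k, ∑ j, (M l j : ℝ) * w l j := by
      apply Finset.sum_congr rfl
      intro l hl
      have h := Finset.mem_erase.mp hl
      have h' := Finset.mem_erase.mp h.2
      apply Finset.sum_congr rfl
      intro j _
      rw [hulj l h'.1 h.1 j]
    rw [h1, h2, h3]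
    ring
  have hkey : allocVal w (Mex i) + (∑ j, (M k j : ℝ) * w i j)
      ≤ allocVal w (Mex k) + ∑ j, (M k j : ℝ) * w k j := by
    linarith [hvY, hvZ, hsplit, hvalu]
  rw [hp i, hp k]
  linarith [hkey]
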